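/- Let T be a t-norm and let R be a fuzzy T-equivalence on a set U with a dually well-ordered spectrum. If A, B ⊆ U satisfy A_E ⊆ B_E and A^E ⊆ B^E, then μ_{[A]_R}(x) ≤ μ_{[B]_R}(x) and μ_{[A]^R}(x) ≤ μ_{[B]^R}(x) for all x ∈ U; i.e., the map sending the crisp rough set (A_E, A^E) to the fuzzy rough set (μ_{[A]_R}, μ_{[A]^R}) is order-preserving. -/
import Mathlib


open unitInterval

noncomputable section

instance : Fact ((0:ℝ) ≤ 1) := ⟨zero_le_one⟩

/-- A t-norm on the unit interval: commutative, associative, monotone in each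
argument, with `1` as unit. -/
def IsTnorm (T : I → I → I) : Prop :=
  (∀ x y, T x y = T y x) ∧
  (∀ x y z, T (T x y) z = T x (T y z)) ∧
  (∀ x₁ x₂ y, x₁ ≤ x₂ → T x₁ y ≤ T x₂ y) ∧
  (∀ x y₁ y₂, y₁ ≤ y₂ → T x y₁ ≤ T x y₂) ∧
  (∀ x, T x 1 = x)

/-- A fuzzy `T`-equivalence: reflexive, symmetric, `T`-transitive fuzzy relation. -/
def IsFuzzyTEquiv {U : Type*} (T : I → I → I) (μ : U → U → I) : Prop :=
  (∀ x, μ x x = 1) ∧ (∀ x y, μ x y = μ y x) ∧ (∀ x y z, T (μ x y) (μ y z) ≤ μ x z)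

/-- Fuzzy upper approximation of a crisp set `A`: `sup {μ x y | y ∈ A}` (`sup ∅ = 0`). -/
def upperApp {U : Type*} (μ : U → U → I) (A : Set U) (x : U) : I := sSup (μ x '' A)

/-- Fuzzy lower approximation of a crisp set `A`: `inf {1 - μ x y | y ∉ A}` (`inf ∅ = 1`). -/
def lowerApp {U : Type*} (μ : U → U → I) (A : Set U) (x : U) : I :=
  sInf ((fun y => σ (μ x y)) '' Aᶜ)

/-- The spectrum of a fuzzy relation. -/
def fuzzySpectrum {U : Type*} (μ : U → U → I) : Set I := {r | ∃ x y, μ x y = r}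

/-- `R` has a dually well-ordered spectrum: every nonempty subset of the
spectrum has a greatest element. -/
def DuallyWellOrdered {U : Type*} (μ : U → U → I) : Prop :=
  ∀ s ⊆ fuzzySpectrum μ, s.Nonempty → ∃ m ∈ s, ∀ r ∈ s, r ≤ m

/-- Upper approximation by the crisp equivalence `E = {(x,y) | μ x y = 1}`. -/
def upperE {U : Type*} (μ : U → U → I) (A : Set U) : Set U :=
  {x | ({y | μ x y = 1} ∩ A).Nonempty}

/-- Lower approximation by the crisp equivalence `E = {(x,y) | μ x y = 1}`. -/
def lowerE {U : Type*} (μ : U → U → I) (A : Set U) : Set U :=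
  {x | {y | μ x y = 1} ⊆ A}

/-- Upper approximation by the support relation `S = {(x,y) | μ x y > 0}`. -/
def upperS {U : Type*} (μ : U → U → I) (A : Set U) : Set U :=
  {x | ({y | 0 < μ x y} ∩ A).Nonempty}

/-- Lower approximation by the support relation `S = {(x,y) | μ x y > 0}`. -/
def lowerS {U : Type*} (μ : U → U → I) (A : Set U) : Set U :=
  {x | {y | 0 < μ x y} ⊆ A}

/-- the map `(A_E, A^E) ↦ (μ_[A]_R, μ_[A]^R)` is order-preserving. -/
theorem stmt8 {U : Type*} (T : I → I → I) (μ : U → U → I)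
    (hT : IsTnorm T) (hR : IsFuzzyTEquiv T μ) (hD : DuallyWellOrdered μ)
    (A B : Set U) (h₁ : lowerE μ A ⊆ lowerE μ B) (h₂ : upperE μ A ⊆ upperE μ B) :
    ∀ x : U, lowerApp μ A x ≤ lowerApp μ B x ∧ upperApp μ A x ≤ upperApp μ B x := by
  obtain ⟨hTc, hTa, hTm1, hTm2, hTu⟩ := hT
  obtain ⟨href, hsym, htrans⟩ := hR
  have key : ∀ x y z : U, μ y z = 1 → μ x y ≤ μ x z := by
    intro x y z hz
    calc μ x y = T (μ x y) 1 := (hTu _).symm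
      _ = T (μ x y) (μ y z) := by rw [hz]
      _ ≤ μ x z := htrans x y z
  intro x
  constructor
  · apply le_sInf
    rintro b ⟨y, hyB, rfl⟩
    have hynB : y ∉ lowerE μ A := fun hA => hyB (h₁ hA (href y))
    obtain ⟨z, hz1, hznA⟩ := Set.not_subset.mp hynB
    refine sInf_le_of_le ⟨z, hznA, rfl⟩ ?_
    exact symm_le_symm.mpr (key x y z hz1)
  · apply sSup_le
    rintro b ⟨y, hyA, rfl⟩
    obtain ⟨z, hz1, hzB⟩ := h₂ ⟨y, href y, hyA⟩
    exact le_sSup_of_le ⟨z, hzB, rfl⟩ (key x y z hz1)
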